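/- Let n ≥ 3, let d_1, ..., d_{n−1} be positive real numbers, and let z be a real number with |z| < 2·min(d_1, d_2). Let M be the n×n real symmetric matrix with M_{1,1} = 0, M_{1,i+1} = M_{i+1,1} = d_i for 1 ≤ i ≤ n−1, M_{i+1,i+1} = −2 d_i for 1 ≤ i ≤ n−1, M_{2,3} = M_{3,2} = z, and all other entries 0. Then M has exactly 1 positive eigenvalue and n−1 negative eigenvalues. -/

import Mathlib

open Matrix

/-- Number of positive eigenvalues (with multiplicity) of a real symmetric matrix. -/
noncomputable def posEig {n : ℕ} {A : Matrix (Fin n) (Fin n) ℝ} (hA : A.IsHermitian) : ℕ :=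
  Nat.card {i : Fin n // 0 < hA.eigenvalues i}

noncomputable def zeroEig {n : ℕ} {A : Matrix (Fin n) (Fin n) ℝ} (hA : A.IsHermitian) : ℕ :=
  Nat.card {i : Fin n // hA.eigenvalues i = 0}

noncomputable def negEig {n : ℕ} {A : Matrix (Fin n) (Fin n) ℝ} (hA : A.IsHermitian) : ℕ :=
  Nat.card {i : Fin n // hA.eigenvalues i < 0}

/-- Total weight of a walk: sum of weights of its edges. -/
noncomputable def walkWeight {V : Type*} {G : SimpleGraph V} (w : Sym2 V → ℝ)
    {u v : V} (p : G.Walk u v) : ℝ :=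
  (p.edges.map w).sum

/-- Weighted shortest-path distance. -/
noncomputable def wdist {V : Type*} (G : SimpleGraph V) (w : Sym2 V → ℝ) (u v : V) : ℝ :=
  sInf {x | ∃ p : G.Walk u v, walkWeight w p = x}

/-- The distance matrix of a weighted graph on `Fin n`. -/
noncomputable def distMatrix {n : ℕ} (G : SimpleGraph (Fin n)) (w : Sym2 (Fin n) → ℝ) :
    Matrix (Fin n) (Fin n) ℝ :=
  Matrix.of fun i j => wdist G w i j

section Aux

/-- Spectral formula for the quadratic form of a real symmetric matrix. -/
lemma quad_spectral' {n : ℕ} (A : Matrix (Fin n) (Fin n) ℝ) (hA : A.IsHermitian)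
    (x : EuclideanSpace ℝ (Fin n)) :
    ∑ i, ∑ j, x i * A i j * x j
      = ∑ i, hA.eigenvalues i * (hA.eigenvectorBasis.repr x i)^2 := by
  set b := hA.eigenvectorBasis with hb
  have hsymm : ∀ i j, A i j = A j i := by
    intro i j
    have := congrFun (congrFun hA j) i
    simpa [Matrix.conjTranspose_apply] using this
  have hAx : ∀ y : EuclideanSpace ℝ (Fin n), ∀ i,
      b.repr (WithLp.toLp 2 (A *ᵥ y : Fin n → ℝ)) i
        = hA.eigenvalues i * b.repr y i := by
    intro y i
    rw [b.repr_apply_apply, b.repr_apply_apply]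
    have h1 : (inner ℝ (b i) (WithLp.toLp 2 (A *ᵥ y : Fin n → ℝ)) : ℝ)
        = ∑ k, (b i : EuclideanSpace ℝ (Fin n)) k * (A *ᵥ (y : Fin n → ℝ)) k := by
      simp [PiLp.inner_apply]; exact Finset.sum_congr rfl fun k _ => mul_comm _ _
    have h2 : (inner ℝ (b i) y : ℝ) = ∑ k, (b i : EuclideanSpace ℝ (Fin n)) k * y k := by
      simp [PiLp.inner_apply]; exact Finset.sum_congr rfl fun k _ => mul_comm _ _
    rw [h1, h2]
    have hb' := hA.mulVec_eigenvectorBasis i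
    calc ∑ k, (b i : EuclideanSpace ℝ (Fin n)) k * (A *ᵥ (y : Fin n → ℝ)) k
        = ∑ k, ∑ j, (b i : EuclideanSpace ℝ (Fin n)) k * (A k j * y j) := by
          simp [Matrix.mulVec, dotProduct, Finset.mul_sum]
      _ = ∑ j, (∑ k, A j k * (b i : EuclideanSpace ℝ (Fin n)) k) * y j := by
          rw [Finset.sum_comm]
          refine Finset.sum_congr rfl fun j _ => ?_
          rw [Finset.sum_mul]
          refine Finset.sum_congr rfl fun k _ => ?_
          rw [hsymm k j]; ring
      _ = ∑ j, (hA.eigenvalues i * (b i : EuclideanSpace ℝ (Fin n)) j) * y j := by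
          refine Finset.sum_congr rfl fun j _ => ?_
          congr 1
          have : (A *ᵥ ⇑(b i)) j = (hA.eigenvalues i • ⇑(b i)) j := by rw [hb']
          simpa [Matrix.mulVec, dotProduct] using this
      _ = hA.eigenvalues i * ∑ j, (b i : EuclideanSpace ℝ (Fin n)) j * y j := by
          rw [Finset.mul_sum]; refine Finset.sum_congr rfl fun j _ => ?_; ring
  have hinner : ∀ u v : EuclideanSpace ℝ (Fin n),
      (inner ℝ u v : ℝ) = ∑ i, b.repr u i * b.repr v i := by
    intro u v
    have h := b.repr.inner_map_map u v
    simp only [PiLp.inner_apply, RCLike.inner_apply, starRingEnd_apply, star_trivial] at h ⊢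
    rw [← h]; exact Finset.sum_congr rfl fun k _ => mul_comm _ _
  have key : (inner ℝ x (WithLp.toLp 2 (A *ᵥ x : Fin n → ℝ)) : ℝ)
      = ∑ i, hA.eigenvalues i * (b.repr x i)^2 := by
    rw [hinner]
    refine Finset.sum_congr rfl fun i _ => ?_
    rw [hAx]; ring
  rw [← key]
  simp only [PiLp.inner_apply, RCLike.inner_apply, starRingEnd_apply, star_trivial]
  refine Finset.sum_congr rfl fun i _ => ?_
  simp [Matrix.mulVec, dotProduct, Finset.mul_sum]
  rw [Finset.sum_mul]; refine Finset.sum_congr rfl fun j _ => ?_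
  ring

lemma double_sum_eval' (m : ℕ) (d : Fin (m+2) → ℝ) (z : ℝ)
    (M' : Fin (m+2) → Fin (m+2) → ℝ)
    (h : ∀ i j, M' i j = (if i = j then -2*d i else 0)
        + (if i = 0 ∧ j = 1 then z else 0) + (if i = 1 ∧ j = 0 then z else 0))
    (y : Fin (m+2) → ℝ) :
    ∑ i, ∑ j, y i * M' i j * y j = (∑ i, -2*d i * (y i)^2) + 2*z*(y 0)*(y 1) := by
  have h01 : (0 : Fin (m+2)) ≠ 1 := by simp [Fin.ext_iff]
  have inner_eq : ∀ i, ∑ j, y i * M' i j * y j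
      = -2*d i * (y i)^2 + ((if i = 0 then y 0 * z * y 1 else 0)
        + (if i = 1 then y 1 * z * y 0 else 0)) := by
    intro i
    have key : ∀ j, y i * M' i j * y j
        = (if i = j then -2*d i * (y i)^2 else 0)
          + ((if i = 0 ∧ j = 1 then y 0 * z * y 1 else 0)
          + (if i = 1 ∧ j = 0 then y 1 * z * y 0 else 0)) := by
      intro j
      rw [h i j]
      by_cases h1 : i = j
      · subst h1
        have h2 : ¬(i = 0 ∧ i = 1) := by rintro ⟨rfl, hc⟩; exact h01 hc
        have h3 : ¬(i = 1 ∧ i = 0) := by rintro ⟨rfl, hc⟩; exact h01 hc.symm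
        simp [h2, h3]; ring
      · by_cases h2 : i = 0 ∧ j = 1
        · obtain ⟨rfl, rfl⟩ := h2
          have h3 : ¬((0 : Fin (m+2)) = 1 ∧ (1 : Fin (m+2)) = 0) := by
            rintro ⟨hc, -⟩; exact h01 hc
          simp [h1, h3]
        · by_cases h3 : i = 1 ∧ j = 0
          · obtain ⟨rfl, rfl⟩ := h3
            simp [h1, h2]
          · simp [h1, h2, h3]
    simp_rw [key]
    rw [Finset.sum_add_distrib, Finset.sum_ite_eq]
    simp_rw [ite_and]
    rw [Finset.sum_add_distrib]
    by_cases hi0 : i = 0 <;> by_cases hi1 : i = 1 <;>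
      simp [hi0, hi1, Finset.sum_ite_eq, Finset.sum_ite_eq']
  simp_rw [inner_eq]
  rw [Finset.sum_add_distrib, Finset.sum_add_distrib, Finset.sum_ite_eq', Finset.sum_ite_eq']
  simp
  ring

lemma neg_part' (m : ℕ) (d : Fin (m+2) → ℝ) (hd : ∀ i, 0 < d i) (z : ℝ)
    (hz : |z| < 2 * min (d 0) (d 1)) (y : Fin (m+2) → ℝ) (hy : y ≠ 0) :
    (∑ i, -2*d i * (y i)^2) + 2*z*(y 0)*(y 1) < 0 := by
  have h01 : (0 : Fin (m+2)) ≠ 1 := by simp [Fin.ext_iff]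
  have hsum2 : 2*d 0*(y 0)^2 + 2*d 1*(y 1)^2 ≤ ∑ i, 2*d i*(y i)^2 := by
    have := Finset.sum_le_sum_of_subset_of_nonneg
      (s := ({0, 1} : Finset (Fin (m+2)))) (t := Finset.univ)
      (f := fun i => 2*d i*(y i)^2) (Finset.subset_univ _)
      (fun i _ _ => by have := hd i; positivity)
    rwa [Finset.sum_pair h01] at this
  have hneg : (∑ i, -2*d i * (y i)^2) = -(∑ i, 2*d i*(y i)^2) := by
    rw [← Finset.sum_neg_distrib]
    exact Finset.sum_congr rfl fun i _ => by ring
  rw [hneg]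
  by_cases hy01 : y 0 = 0 ∧ y 1 = 0
  · obtain ⟨h0, h1⟩ := hy01
    rw [h0, h1]
    have hpos : 0 < ∑ i, 2*d i*(y i)^2 := by
      obtain ⟨k, hk⟩ : ∃ k, y k ≠ 0 := by
        by_contra hc; push_neg at hc; exact hy (funext hc)
      refine Finset.sum_pos' (fun i _ => by have := hd i; positivity) ⟨k, Finset.mem_univ k, ?_⟩
      have : 0 < (y k)^2 := by positivity
      have := hd k; positivity
    nlinarith
  · have hs : 0 < (y 0)^2 + (y 1)^2 := by
      rcases not_and_or.1 hy01 with h | h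
      · have : 0 < (y 0)^2 := by positivity
        nlinarith [sq_nonneg (y 1)]
      · have : 0 < (y 1)^2 := by positivity
        nlinarith [sq_nonneg (y 0)]
    have hmin0 : min (d 0) (d 1) ≤ d 0 := min_le_left _ _
    have hmin1 : min (d 0) (d 1) ≤ d 1 := min_le_right _ _
    have habs1 : 0 ≤ (|z| - z) * (y 0 + y 1)^2 :=
      mul_nonneg (by linarith [le_abs_self z]) (sq_nonneg _)
    have habs2 : 0 ≤ (|z| + z) * (y 0 - y 1)^2 :=
      mul_nonneg (by linarith [neg_abs_le z]) (sq_nonneg _)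
    have hstep : |z| * ((y 0)^2 + (y 1)^2) < 2 * min (d 0) (d 1) * ((y 0)^2 + (y 1)^2) :=
      mul_lt_mul_of_pos_right hz hs
    nlinarith

/-- coefficients vanish off the spanning set -/
lemma repr_eq_zero_of_mem_span' {n : ℕ} (b : OrthonormalBasis (Fin n) ℝ (EuclideanSpace ℝ (Fin n)))
    (s : Set (Fin n)) (x : EuclideanSpace ℝ (Fin n))
    (hx : x ∈ Submodule.span ℝ (Set.range (fun i : s => (b i : EuclideanSpace ℝ (Fin n)))))
    (i : Fin n) (hi : i ∉ s) : b.repr x i = 0 := by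
  rw [b.repr_apply_apply]
  induction hx using Submodule.span_induction with
  | mem y hy =>
      obtain ⟨⟨j, hj⟩, rfl⟩ := hy
      exact b.orthonormal.2 (fun h : i = j => hi (h ▸ hj))
  | zero => simp
  | add y z' _ _ hy hz' => rw [inner_add_right, hy, hz']; ring
  | smul c y _ hy => rw [inner_smul_right, hy]; simp

end Aux

/-- The `n × n` matrix (`n = m + 3 ≥ 3`) which is the arrowhead matrix with
first row/column `d_1, …, d_{n-1}` (all positive) and diagonal `-2 d_1, …, -2 d_{n-1}`,
modified by putting `z` (with `|z| < 2 · min d_1 d_2`) in positions `(2,3)` and `(3,2)`,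
has exactly 1 positive and `n - 1` negative eigenvalues. -/
theorem perturbed_arrowhead_inertia (m : ℕ) (d : Fin (m + 2) → ℝ) (hd : ∀ i, 0 < d i)
    (z : ℝ) (hz : |z| < 2 * min (d 0) (d 1))
    (M : Matrix (Fin (m + 3)) (Fin (m + 3)) ℝ)
    (hM00 : M 0 0 = 0)
    (hMrow : ∀ i : Fin (m + 2), M 0 i.succ = d i)
    (hMcol : ∀ i : Fin (m + 2), M i.succ 0 = d i)
    (hMdiag : ∀ i : Fin (m + 2), M i.succ i.succ = -2 * d i)
    (hMz : M (0 : Fin (m + 2)).succ (1 : Fin (m + 2)).succ = z)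
    (hMz' : M (1 : Fin (m + 2)).succ (0 : Fin (m + 2)).succ = z)
    (hMoff : ∀ i j : Fin (m + 2), i ≠ j → ¬(i = 0 ∧ j = 1) → ¬(i = 1 ∧ j = 0) →
      M i.succ j.succ = 0)
    (hM : M.IsHermitian) :
    posEig hM = 1 ∧ zeroEig hM = 0 ∧ negEig hM = m + 2 := by
  unfold posEig zeroEig negEig
  classical
  set lam := hM.eigenvalues with hlam
  set b := hM.eigenvectorBasis with hb
  have h01 : (0 : Fin (m+2)) ≠ 1 := by simp [Fin.ext_iff]
  -- decomposition of the succ-succ block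
  have hdec : ∀ i j : Fin (m + 2), M i.succ j.succ
      = (if i = j then -2*d i else 0) + (if i = 0 ∧ j = 1 then z else 0)
        + (if i = 1 ∧ j = 0 then z else 0) := by
    intro i j
    by_cases h1 : i = j
    · subst h1
      have h2 : ¬(i = 0 ∧ i = 1) := by rintro ⟨rfl, hc⟩; exact h01 hc
      have h3 : ¬(i = 1 ∧ i = 0) := by rintro ⟨rfl, hc⟩; exact h01 hc.symm
      simp [h2, h3, hMdiag]
    · by_cases h2 : i = 0 ∧ j = 1
      · obtain ⟨rfl, rfl⟩ := h2
        have h3 : ¬((0:Fin (m+2)) = 1 ∧ (1:Fin (m+2)) = 0) := by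
          rintro ⟨hc, -⟩; exact h01 hc
        rw [hMz, if_neg h1, if_pos ⟨rfl, rfl⟩, if_neg h3]; ring
      · by_cases h3 : i = 1 ∧ j = 0
        · obtain ⟨rfl, rfl⟩ := h3
          rw [hMz', if_neg h1, if_neg h2, if_pos ⟨rfl, rfl⟩]; ring
        · simp [h1, h2, h3, hMoff i j h1 h2 h3]
  -- closed form of the quadratic form
  have split : ∀ f : Fin (m+3) → ℝ, ∑ i, f i = f 0 + ∑ i : Fin (m+2), f i.succ :=
    fun f => Fin.sum_univ_succ f
  have hQform : ∀ x : Fin (m+3) → ℝ,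
      ∑ i, ∑ j, x i * M i j * x j
        = 2 * (x 0 * ∑ i : Fin (m+2), d i * x i.succ)
          + ((∑ i : Fin (m+2), -2*d i * (x i.succ)^2)
            + 2*z*(x (0:Fin (m+2)).succ)*(x (1:Fin (m+2)).succ)) := by
    intro x
    have e1 : ∑ j : Fin (m+2), x 0 * M 0 j.succ * x j.succ
        = x 0 * ∑ i : Fin (m+2), d i * x i.succ := by
      rw [Finset.mul_sum]; exact Finset.sum_congr rfl fun j _ => by rw [hMrow]; ring
    have e2 : ∑ i : Fin (m+2), x i.succ * M i.succ 0 * x 0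
        = x 0 * ∑ i : Fin (m+2), d i * x i.succ := by
      rw [Finset.mul_sum]; exact Finset.sum_congr rfl fun j _ => by rw [hMcol]; ring
    have e3 := double_sum_eval' m d z (fun i j => M i.succ j.succ) hdec (fun i => x i.succ)
    calc ∑ i, ∑ j, x i * M i j * x j
        = (∑ j, x 0 * M 0 j * x j)
          + ∑ i : Fin (m+2), ∑ j, x i.succ * M i.succ j * x j := split _
      _ = (x 0 * M 0 0 * x 0 + ∑ j : Fin (m+2), x 0 * M 0 j.succ * x j.succ)
          + ∑ i : Fin (m+2), (x i.succ * M i.succ 0 * x 0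
            + ∑ j : Fin (m+2), x i.succ * M i.succ j.succ * x j.succ) := by
            rw [split (fun j => x 0 * M 0 j * x j)]
            congr 1
            exact Finset.sum_congr rfl fun i _ => split _
      _ = (0 + x 0 * ∑ i : Fin (m+2), d i * x i.succ)
          + (x 0 * ∑ i : Fin (m+2), d i * x i.succ
            + ((∑ i : Fin (m+2), -2*d i * (x i.succ)^2)
              + 2*z*(x (0:Fin (m+2)).succ)*(x (1:Fin (m+2)).succ))) := by
            rw [Finset.sum_add_distrib, e1, e2, hM00, e3]; ring
      _ = _ := by ring
  -- the positive witness
  set w : Fin (m+3) → ℝ :=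
    fun k => if k = 0 then 1 else if k = (0:Fin (m+2)).succ then (1:ℝ)/2 else 0 with hw
  have hw0 : w 0 = 1 := by simp [hw]
  have hws : ∀ i : Fin (m+2), w i.succ = if i = 0 then (1:ℝ)/2 else 0 := by
    intro i
    simp only [hw]
    rw [if_neg (Fin.succ_ne_zero i)]
    by_cases hi : i = 0
    · subst hi; simp
    · rw [if_neg fun hc => hi (Fin.succ_injective _ hc), if_neg hi]
  have hQw : ∑ i, ∑ j, w i * M i j * w j = d 0 / 2 := by
    rw [hQform w, hw0]
    have e1 : ∑ i : Fin (m+2), d i * w i.succ = d 0 / 2 := by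
      simp_rw [hws]
      simp
      ring
    have e2 : ∑ i : Fin (m+2), -2*d i * (w i.succ)^2 = -(d 0)/2 := by
      have : ∀ i : Fin (m+2), -2*d i * (w i.succ)^2
          = if i = 0 then -(d i)/2 else 0 := by
        intro i
        rw [hws]
        by_cases hi : i = 0 <;> simp [hi] <;> ring
      simp_rw [this]
      simp
    rw [e1, e2, hws, hws]
    rw [if_neg (Ne.symm h01), if_pos rfl]
    ring
  -- spectral nonpositivity bound: positive count is at least 1
  have hP : 0 < Nat.card {i : Fin (m+3) // 0 < lam i} := by
    by_contra hcon
    push_neg at hcon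
    have hall : ∀ i, lam i ≤ 0 := by
      intro i
      by_contra hi
      push_neg at hi
      haveI : Nonempty {i : Fin (m+3) // 0 < lam i} := ⟨⟨i, hi⟩⟩
      have := Nat.card_pos (α := {i : Fin (m+3) // 0 < lam i})
      omega
    have hspec := quad_spectral' M hM (WithLp.toLp 2 w)
    simp only [WithLp.ofLp_toLp] at hspec
    have hle : ∑ i, ∑ j, w i * M i j * w j ≤ 0 := by
      rw [hspec]
      exact Finset.sum_nonpos fun i _ =>
        mul_nonpos_iff.2 (Or.inr ⟨hall i, sq_nonneg _⟩)
    rw [hQw] at hle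
    have := hd 0
    linarith
  -- nonnegative count is at most 1
  have hk : Nat.card {i : Fin (m+3) // 0 ≤ lam i} ≤ 1 := by
    by_contra hcon
    push_neg at hcon
    set s : Set (Fin (m+3)) := {i | 0 ≤ lam i} with hs
    have hli : LinearIndependent ℝ (fun i : s => (b i : EuclideanSpace ℝ (Fin (m+3)))) :=
      b.orthonormal.linearIndependent.comp Subtype.val Subtype.val_injective
    set V : Submodule ℝ (EuclideanSpace ℝ (Fin (m+3))) :=
      Submodule.span ℝ (Set.range (fun i : s => (b i : EuclideanSpace ℝ (Fin (m+3))))) with hV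
    have hVrank : Module.finrank ℝ ↥V = Nat.card {i : Fin (m+3) // 0 ≤ lam i} := by
      rw [finrank_span_eq_card hli, Nat.card_eq_fintype_card]
      exact Fintype.card_congr (Equiv.subtypeEquivRight fun _ => Iff.rfl)
    set π : EuclideanSpace ℝ (Fin (m+3)) →ₗ[ℝ] ℝ :=
      { toFun := fun v => v 0, map_add' := fun _ _ => rfl, map_smul' := fun _ _ => rfl } with hπ
    have hsurj : Function.Surjective π := fun c =>
      ⟨WithLp.toLp 2 (fun _ => c), rfl⟩
    have hWrank : Module.finrank ℝ ↥(LinearMap.ker π) = m + 2 := by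
      have h1 := LinearMap.finrank_range_add_finrank_ker π
      rw [LinearMap.range_eq_top.2 hsurj, finrank_top, finrank_euclideanSpace] at h1
      simp only [Module.finrank_self, Fintype.card_fin] at h1
      omega
    have hsum := Submodule.finrank_sup_add_finrank_inf_eq V (LinearMap.ker π)
    have hsuple : Module.finrank ℝ ↥(V ⊔ LinearMap.ker π) ≤ m + 3 := by
      have h2 := Submodule.finrank_le (V ⊔ LinearMap.ker π)
      rwa [finrank_euclideanSpace, Fintype.card_fin] at h2
    have hinfpos : 0 < Module.finrank ℝ ↥(V ⊓ LinearMap.ker π) := by omega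
    have hne : V ⊓ LinearMap.ker π ≠ ⊥ := by
      intro hbot; rw [hbot, finrank_bot] at hinfpos; exact lt_irrefl 0 hinfpos
    obtain ⟨x, hxmem, hxne⟩ := Submodule.exists_mem_ne_zero_of_ne_bot hne
    obtain ⟨hxV, hxW⟩ := Submodule.mem_inf.1 hxmem
    have hx0 : x 0 = 0 := LinearMap.mem_ker.1 hxW
    have hnonneg : 0 ≤ ∑ i, ∑ j, x i * M i j * x j := by
      rw [quad_spectral' M hM x]
      refine Finset.sum_nonneg fun i _ => ?_
      by_cases hi : 0 ≤ lam i
      · exact mul_nonneg hi (sq_nonneg _)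
      · rw [repr_eq_zero_of_mem_span' b s x hxV i hi]; simp
    have hyne : (fun i : Fin (m+2) => x i.succ) ≠ 0 := by
      intro hc
      apply hxne
      have hzz : ∀ k : Fin (m+3), x k = 0 := by
        intro k
        refine Fin.cases ?_ ?_ k
        · exact hx0
        · intro i; exact congrFun hc i
      exact WithLp.ofLp_injective 2 (funext hzz)
    have hneg := neg_part' m d hd z hz _ hyne
    have hQx := hQform x
    rw [hx0] at hQx
    rw [hQx] at hnonneg
    nlinarith [hneg, hnonneg]
  -- counting
  have hPZ : Nat.card {i : Fin (m+3) // 0 < lam i} + Nat.card {i : Fin (m+3) // lam i = 0}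
      = Nat.card {i : Fin (m+3) // 0 ≤ lam i} := by
    simp only [Nat.card_eq_fintype_card, Fintype.card_subtype]
    rw [← Finset.card_union_of_disjoint, ← Finset.filter_or]
    · apply congrArg
      refine Finset.filter_congr fun i _ => ?_
      constructor
      · rintro (h | h)
        · exact le_of_lt h
        · exact le_of_eq h.symm
      · intro h
        rcases lt_or_eq_of_le h with h' | h'
        · exact Or.inl h'
        · exact Or.inr h'.symm
    · rw [Finset.disjoint_left]
      intro a ha hb
      rw [Finset.mem_filter] at ha hb
      exact absurd hb.2 (ne_of_gt ha.2)
  have htot : Nat.card {i : Fin (m+3) // 0 ≤ lam i} + Nat.card {i : Fin (m+3) // lam i < 0}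
      = m + 3 := by
    simp only [Nat.card_eq_fintype_card, Fintype.card_subtype]
    have hfc : Finset.univ.filter (fun i : Fin (m+3) => lam i < 0)
        = Finset.univ.filter (fun i => ¬ 0 ≤ lam i) :=
      Finset.filter_congr fun i _ => (not_le).symm
    rw [hfc, Finset.card_filter_add_card_filter_not]
    simp
  refine ⟨?_, ?_, ?_⟩ <;> omega
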